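/- arXiv:1902.09064 — 2 statements merged into one kernel-verified Lean document; each statement's English description precedes it below -/
import Mathlib

section
/- Let a_i > 0, t_i > 0, and let I₀ < 0 satisfy I₀ < −3 (so that a_TA > a_i). Define a(t) = a_i (t/t_i)^{2/3}, H(t) = 2/(3t), ξ(t) = (a(t) − a_i)/a_i, and 𝒥(t) = 1 + ξ(t)·I₀. Then the turnaround condition ȧ(t)·I₀ = −3H(t)·[a_i + (a(t) − a_i)·I₀], equivalently 𝒥̇/(H_i 𝒥) = −3H/H_i evaluated at time t, holds exactly when a(t) = a_TA := (3a_i/4)(1 − 1/I₀); and the corresponding time is t_TA = t_i (a_TA/a_i)^{3/2}. Moreover, at t = t_TA, d/dt [a(t)³ 𝒥(t)]^{1/3} = 0. -/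
theorem EdS_turnaround_epoch (aᵢ tᵢ I₀ : ℝ)
    (ha : aᵢ > 0) (ht : tᵢ > 0) (hI : I₀ < -3) :
    let a : ℝ → ℝ := fun t => aᵢ * (t / tᵢ) ^ ((2:ℝ)/3)
    let H : ℝ → ℝ := fun t => 2 / (3 * t)
    let ξ : ℝ → ℝ := fun t => (a t - aᵢ) / aᵢ
    let 𝒥 : ℝ → ℝ := fun t => 1 + ξ t * I₀
    let aTA : ℝ := (3 * aᵢ / 4) * (1 - 1 / I₀)
    let tTA : ℝ := tᵢ * (aTA / aᵢ) ^ ((3:ℝ)/2)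
    (∀ t : ℝ, t > 0 →
      (deriv a t * I₀ = -3 * H t * (aᵢ + (a t - aᵢ) * I₀) ↔ a t = aTA)) ∧
    a tTA = aTA ∧
    deriv (fun t => ((a t)^3 * 𝒥 t) ^ ((1:ℝ)/3)) tTA = 0 := by
  intro a H ξ 𝒥 aTA tTA
  have hI0 : I₀ < 0 := by linarith
  have hI0' : I₀ ≠ 0 := ne_of_lt hI0
  have ha' : aᵢ ≠ 0 := ne_of_gt ha
  have ht' : tᵢ ≠ 0 := ne_of_gt ht
  have haTA : (0:ℝ) < aTA := by
    have h1 : 1/I₀ < 0 := div_neg_of_pos_of_neg one_pos hI0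
    have h2 : (0:ℝ) < 1 - 1/I₀ := by linarith
    have h3 : (0:ℝ) < 3 * aᵢ / 4 := by linarith
    exact mul_pos h3 h2
  have hcpos : (0:ℝ) < aTA / aᵢ := div_pos haTA ha
  have htTA : (0:ℝ) < tTA := mul_pos ht (Real.rpow_pos_of_pos hcpos _)
  -- general derivative of a at positive t
  have hderiv : ∀ t : ℝ, 0 < t → HasDerivAt a (H t * a t) t := by
    intro t htp
    have hq : (0:ℝ) < t / tᵢ := div_pos htp ht
    have h1 : HasDerivAt (fun s : ℝ => s / tᵢ) (1 / tᵢ) t := by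
      simpa using (hasDerivAt_id t).div_const tᵢ
    have h2 : HasDerivAt (fun s : ℝ => (s / tᵢ) ^ ((2:ℝ)/3))
        (1 / tᵢ * ((2:ℝ)/3) * (t / tᵢ) ^ ((2:ℝ)/3 - 1)) t :=
      h1.rpow_const (Or.inl (ne_of_gt hq))
    have h3 := h2.const_mul aᵢ
    refine h3.congr_deriv ?_
    symm
    show 2 / (3 * t) * (aᵢ * (t / tᵢ) ^ ((2:ℝ)/3)) = _
    have hsub : (t / tᵢ) ^ ((2:ℝ)/3 - 1) = (t / tᵢ) ^ ((2:ℝ)/3) / (t / tᵢ) := by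
      rw [Real.rpow_sub hq, Real.rpow_one]
    rw [hsub]
    have htne : t ≠ 0 := ne_of_gt htp
    field_simp
  -- value of a at tTA
  have haval : a tTA = aTA := by
    show aᵢ * (tᵢ * (aTA / aᵢ) ^ ((3:ℝ)/2) / tᵢ) ^ ((2:ℝ)/3) = aTA
    rw [mul_comm tᵢ, mul_div_assoc, div_self ht', mul_one]
    rw [← Real.rpow_mul hcpos.le]
    norm_num
    field_simp
  refine ⟨?_, haval, ?_⟩
  · intro t htp
    have hH : H t ≠ 0 := by
      show 2 / (3 * t) ≠ 0
      positivity
    rw [(hderiv t htp).deriv]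
    constructor
    · intro h
      have key : H t * (a t * I₀ + 3 * (aᵢ + (a t - aᵢ) * I₀)) = 0 := by
        linear_combination h
      have h4 : a t * I₀ + 3 * (aᵢ + (a t - aᵢ) * I₀) = 0 :=
        (mul_eq_zero.mp key).resolve_left hH
      have : a t * (4 * I₀) = 3 * aᵢ * I₀ - 3 * aᵢ := by linarith
      show a t = (3 * aᵢ / 4) * (1 - 1 / I₀)
      field_simp
      linarith
    · intro h
      rw [h]
      show H t * ((3 * aᵢ / 4) * (1 - 1 / I₀)) * I₀
          = -3 * H t * (aᵢ + ((3 * aᵢ / 4) * (1 - 1 / I₀) - aᵢ) * I₀)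
      field_simp
      ring
  · -- derivative of (a^3 * 𝒥)^(1/3) at tTA
    set d : ℝ := H tTA * a tTA with hd
    have hA : HasDerivAt a d tTA := hderiv tTA htTA
    have h𝒥 : HasDerivAt 𝒥 ((d - 0) / aᵢ * I₀ + 0) tTA := by
      have := (((hA.sub_const aᵢ).div_const aᵢ).mul_const I₀).const_add 1
      exact this.congr_deriv (by ring)
    have hg : HasDerivAt (fun t => (a t)^3 * 𝒥 t)
        ((3 * a tTA ^ 2 * d) * 𝒥 tTA + (a tTA)^3 * ((d - 0) / aᵢ * I₀ + 0)) tTA := by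
      have hp : HasDerivAt (fun t => (a t)^3) ((3:ℕ) * a tTA ^ (3-1) * d) tTA := hA.pow 3
      have := hp.mul h𝒥
      refine this.congr_deriv ?_
      try push_cast
      try ring
    have h𝒥val : 𝒥 tTA = 1 + (aTA - aᵢ) / aᵢ * I₀ := by
      show 1 + (a tTA - aᵢ) / aᵢ * I₀ = _
      rw [haval]
    have hgz : (3 * a tTA ^ 2 * d) * 𝒥 tTA + (a tTA)^3 * ((d - 0) / aᵢ * I₀ + 0) = 0 := by
      rw [h𝒥val, haval]
      show 3 * ((3 * aᵢ / 4) * (1 - 1 / I₀)) ^ 2 * d * (1 + ((3 * aᵢ / 4) * (1 - 1 / I₀) - aᵢ) / aᵢ * I₀)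
          + ((3 * aᵢ / 4) * (1 - 1 / I₀))^3 * ((d - 0) / aᵢ * I₀ + 0) = 0
      field_simp
      ring
    rw [hgz] at hg
    have h𝒥pos : (0:ℝ) < 𝒥 tTA := by
      rw [h𝒥val]
      have : (aTA - aᵢ) / aᵢ * I₀ = -(I₀ + 3) / 4 := by
        show ((3 * aᵢ / 4) * (1 - 1 / I₀) - aᵢ) / aᵢ * I₀ = -(I₀ + 3) / 4
        field_simp
        ring
      rw [this]
      linarith
    have hgne : (a tTA)^3 * 𝒥 tTA ≠ 0 := by
      rw [haval]
      positivity
    have hfinal := hg.rpow_const (p := (1:ℝ)/3) (Or.inl hgne)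
    rw [hfinal.deriv]
    simp
end

section
/- Let Θ̄, ρ̄, σ̄², V, R̄ ≥ 0 denote nonnegative averaged quantities except Θ̄, R̄ ∈ ℝ, and suppose the averaged Hamiltonian constraint (1/3)Θ̄² = 8πG ρ̄ + σ̄² − (1/3)V − (1/2)R̄ + Λ holds with G > 0, ρ̄ > 0, σ̄² ≥ 0, Λ ≥ 0 and V ≥ 0. If Θ̄ = 0 (averaged turnaround) and additionally the kinematical backreaction Q := (2/3)V − 2σ̄² satisfies Q ≤ 0, then R̄ > 0. -/
theorem averaged_turnaround_requires_positive_curvature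
    (Θavg ρavg σ2avg V Ravg G Λ : ℝ)
    (hc : (1/3) * Θavg^2 = 8 * Real.pi * G * ρavg + σ2avg - (1/3) * V
        - (1/2) * Ravg + Λ)
    (hG : G > 0) (hρ : ρavg > 0) (hσ : σ2avg ≥ 0) (hΛ : Λ ≥ 0) (hV : V ≥ 0)
    (hTA : Θavg = 0)
    (hQ : (2/3) * V - 2 * σ2avg ≤ 0) :
    Ravg > 0 := by
  have hπ := Real.pi_pos
  nlinarith [mul_pos (mul_pos hπ hG) hρ]
end
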